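/- Let E be a finite-dimensional real inner product space of dimension at least 2, and let q : E → E → E be a bilinear map which is symmetric, q(X,Y) = q(Y,X). Then the following are equivalent: (i) for every X ∈ E there exists c ∈ ℝ such that ⟨q(X,Y), Z⟩ + ⟨Y, q(X,Z)⟩ = 2c·⟨Y,Z⟩ for all Y, Z ∈ E (i.e. q(X,·) lies in 𝔠𝔬(E) = 𝔰𝔬(E) ⊕ ℝ·id); (ii) there exists a unique Υ ∈ E such that q(X,Y) = ⟨Υ,X⟩·Y + ⟨Υ,Y⟩·X − ⟨X,Y⟩·Υ for all X, Y ∈ E. -/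

import Mathlib

/-- A symmetric bilinear map q : E × E → E has all its value maps
q(X,·) in 𝔠𝔬(E) iff q(X,Y) = ⟨Υ,X⟩Y + ⟨Υ,Y⟩X − ⟨X,Y⟩Υ for a unique Υ ∈ E. -/
theorem stmt_8 (E : Type*) [NormedAddCommGroup E] [InnerProductSpace ℝ E]
    [FiniteDimensional ℝ E] (hdim : 2 ≤ Module.finrank ℝ E)
    (q : E →ₗ[ℝ] E →ₗ[ℝ] E) (hsymm : ∀ X Y : E, q X Y = q Y X) :
    (∀ X : E, ∃ c : ℝ, ∀ Y Z : E,
      (inner ℝ (q X Y) Z : ℝ) + (inner ℝ Y (q X Z) : ℝ) = 2 * c * (inner ℝ Y Z : ℝ)) ↔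
    (∃! Υ : E, ∀ X Y : E,
      q X Y = (inner ℝ Υ X : ℝ) • Y + (inner ℝ Υ Y : ℝ) • X - (inner ℝ X Y : ℝ) • Υ) := by
  have uniq : ∀ Υ Υ' : E,
      (∀ X Y : E, q X Y = (inner ℝ Υ X : ℝ) • Y + (inner ℝ Υ Y : ℝ) • X - (inner ℝ X Y : ℝ) • Υ) →
      (∀ X Y : E, q X Y = (inner ℝ Υ' X : ℝ) • Y + (inner ℝ Υ' Y : ℝ) • X - (inner ℝ X Y : ℝ) • Υ') →
      Υ' = Υ := by
    intro Υ Υ' h h'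
    apply ext_inner_right ℝ
    intro X
    by_cases hX : X = 0
    · simp [hX]
    · have h1 : (inner ℝ (q X X) X : ℝ) = (inner ℝ Υ X : ℝ) * (inner ℝ X X : ℝ) := by
        rw [h X X]
        simp [inner_add_left, inner_sub_left, inner_smul_left, real_inner_comm X Υ]
        ring
      have h2 : (inner ℝ (q X X) X : ℝ) = (inner ℝ Υ' X : ℝ) * (inner ℝ X X : ℝ) := by
        rw [h' X X]
        simp [inner_add_left, inner_sub_left, inner_smul_left, real_inner_comm X Υ']
        ring
      have hXX : (inner ℝ X X : ℝ) ≠ 0 := by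
        simpa [inner_self_eq_zero] using hX
      exact (mul_right_cancel₀ hXX (h1.symm.trans h2)).symm
  constructor
  · intro h
    choose c hc using h
    -- a unit vector
    have hnt : Nontrivial E := by
      have : 0 < Module.finrank ℝ E := by omega
      exact Module.nontrivial_of_finrank_pos this
    obtain ⟨v, hv⟩ := exists_ne (0 : E)
    set Y₀ : E := ‖v‖⁻¹ • v with hY₀def
    have hY₀ : ‖Y₀‖ = 1 := norm_smul_inv_norm hv
    have hY₀Y₀ : (inner ℝ Y₀ Y₀ : ℝ) = 1 := by
      rw [real_inner_self_eq_norm_sq, hY₀]; norm_num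
    -- c X = ⟨q X Y₀, Y₀⟩
    have hcval : ∀ X : E, c X = (inner ℝ (q X Y₀) Y₀ : ℝ) := by
      intro X
      have h0 := hc X Y₀ Y₀
      rw [hY₀Y₀] at h0
      have e := real_inner_comm Y₀ ((q X) Y₀)
      linarith
    -- linear functional and Riesz
    let f : E →ₗ[ℝ] ℝ :=
      { toFun := fun X => (inner ℝ (q X Y₀) Y₀ : ℝ)
        map_add' := by intro a b; simp [inner_add_left]
        map_smul' := by intro a b; simp [inner_smul_left] }
    set Υ : E := (InnerProductSpace.toDual ℝ E).symm (LinearMap.toContinuousLinearMap f)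
      with hΥdef
    have hΥ : ∀ X : E, (inner ℝ Υ X : ℝ) = c X := by
      intro X
      rw [hcval]
      simp [hΥdef, InnerProductSpace.toDual_symm_apply, f]
    -- the trilinear identity
    have hT : ∀ X Y Z : E, (inner ℝ (q X Y) Z : ℝ) =
        c X * (inner ℝ Y Z : ℝ) + c Y * (inner ℝ X Z : ℝ) - c Z * (inner ℝ X Y : ℝ) := by
      intro X Y Z
      have a := hc X Y Z
      have b := hc Z X Y
      have d := hc Y Z X
      have e1 : (inner ℝ Y (q X Z) : ℝ) = (inner ℝ (q Z X) Y : ℝ) := by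
        rw [real_inner_comm, hsymm X Z]
      have e2 : (inner ℝ X (q Z Y) : ℝ) = (inner ℝ (q Y Z) X : ℝ) := by
        rw [real_inner_comm, hsymm Z Y]
      have e3 : (inner ℝ Z (q Y X) : ℝ) = (inner ℝ (q X Y) Z : ℝ) := by
        rw [real_inner_comm, hsymm Y X]
      rw [show (inner ℝ Z X : ℝ) = (inner ℝ X Z : ℝ) from (real_inner_comm Z X).symm] at d
      linarith
    have hmain : ∀ X Y : E,
        q X Y = (inner ℝ Υ X : ℝ) • Y + (inner ℝ Υ Y : ℝ) • X - (inner ℝ X Y : ℝ) • Υ := by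
      intro X Y
      apply ext_inner_right ℝ
      intro Z
      rw [hT X Y Z]
      simp only [inner_add_left, inner_sub_left, real_inner_smul_left]
      rw [hΥ X, hΥ Y, hΥ Z]
      ring
    exact ⟨Υ, hmain, fun Υ' h' => uniq Υ Υ' hmain h'⟩
  · rintro ⟨Υ, hΥ, -⟩
    intro X
    refine ⟨(inner ℝ Υ X : ℝ), fun Y Z => ?_⟩
    rw [hΥ X Y, hΥ X Z]
    simp only [inner_add_left, inner_sub_left, real_inner_smul_left,
      inner_add_right, inner_sub_right, real_inner_smul_right]
    rw [real_inner_comm Y X, real_inner_comm Y Υ]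
    ring
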